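/- Let (V,c,p) be an instance of Asymmetric A Priori TSP with a depot d ∈ V (i.e., p(d) = 1) and with p_min := min_{v∈V} p(v) > 0. Let α ≥ 1 and let T be a tour on V with c(T) ≤ α · TSP(V,c). Then c(T) ≤ α · ⌈1/p_min⌉ · E_{A∼p}[TSP(A,c)]. -/

import Mathlib

set_option linter.unusedSectionVars false
noncomputable section

/-- The cost of a tour given as a cyclic list: the sum of `c` over consecutive pairs
(cyclically). -/
def cycCost {V : Type*} (c : V → V → ℝ) (l : List V) : ℝ :=
  (List.zipWith c l (l.rotate 1)).sum

/-- `l` is a tour on the finite set `A`: a cyclic ordering of `A`, visiting each element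
exactly once. -/
def IsTour {V : Type*} [DecidableEq V] (A : Finset V) (l : List V) : Prop :=
  l.Nodup ∧ l.toFinset = A

/-- The expectation of `f` over the random set of active vertices, where each vertex `v`
is active independently with probability `p v`. -/
def apExpect {V : Type*} [Fintype V] [DecidableEq V] (p : V → ℝ) (f : Finset V → ℝ) : ℝ :=
  ∑ A : Finset V, (∏ v ∈ A, p v) * (∏ v ∈ Aᶜ, (1 - p v)) * f A

/-- The minimum cost of a tour on `A` with respect to `c`. -/
def TSP {V : Type*} [DecidableEq V] (c : V → V → ℝ) (A : Finset V) : ℝ :=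
  sInf {x : ℝ | ∃ l : List V, IsTour A l ∧ x = cycCost c l}

namespace Stmt10

variable {V : Type*}

/-- cost of the walk starting at `x` through the list `l`. -/
def pathCost (c : V → V → ℝ) : V → List V → ℝ
  | _, [] => 0
  | x, y :: l => c x y + pathCost c y l

lemma pathCost_nonneg (c : V → V → ℝ) (hc0 : ∀ x y, 0 ≤ c x y) :
    ∀ (x : V) (l : List V), 0 ≤ pathCost c x l
  | _, [] => le_refl 0
  | x, y :: l => add_nonneg (hc0 x y) (pathCost_nonneg c hc0 y l)

lemma pathCost_append (c : V → V → ℝ) :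
    ∀ (l : List V) (x : V) (r : List V),
      pathCost c x (l ++ r) = pathCost c x l + pathCost c (l.getLastD x) r
  | [], x, r => by simp [pathCost]
  | y :: m, x, r => by
    show c x y + pathCost c y (m ++ r) = _
    rw [pathCost_append c m y r, List.getLastD_cons, pathCost, add_assoc]

lemma zipWith_pathCost (c : V → V → ℝ) :
    ∀ (l : List V) (x z : V),
      (List.zipWith c (x :: l) (l ++ [z])).sum = pathCost c x (l ++ [z])
  | [], x, z => by simp [pathCost]
  | y :: m, x, z => by
    simpa [pathCost] using congrArg (c x y + ·) (zipWith_pathCost c m y z)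

lemma cycCost_cons (c : V → V → ℝ) (x : V) (l : List V) :
    cycCost c (x :: l) = pathCost c x (l ++ [x]) := by
  have : (x :: l).rotate 1 = l ++ [x] := by
    simpa using List.rotate_cons_succ l x 0
  rw [cycCost, this, zipWith_pathCost]

lemma cycCost_nonneg (c : V → V → ℝ) (hc0 : ∀ x y, 0 ≤ c x y) (l : List V) :
    0 ≤ cycCost c l := by
  cases l with
  | nil => simp [cycCost]
  | cons x l => rw [cycCost_cons]; exact pathCost_nonneg c hc0 _ _

lemma cycCost_rotate_one (c : V → V → ℝ) (l : List V) :
    cycCost c (l.rotate 1) = cycCost c l := by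
  cases l with
  | nil => simp
  | cons x m =>
    have h1 : (x :: m).rotate 1 = m ++ [x] := by
      simpa using List.rotate_cons_succ m x 0
    rw [h1]
    cases m with
    | nil => simp
    | cons y m' =>
      rw [List.cons_append, cycCost_cons, cycCost_cons, List.append_assoc m' [x] [y],
        pathCost_append c m' y ([x] ++ [y])]
      show _ = c x y + pathCost c y (m' ++ [x])
      rw [pathCost_append c m' y [x]]
      simp [pathCost]
      ring

lemma cycCost_rotate (c : V → V → ℝ) (l : List V) (n : ℕ) :
    cycCost c (l.rotate n) = cycCost c l := by
  induction n with
  | zero => simp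
  | succ n ih =>
    have : l.rotate (n + 1) = (l.rotate n).rotate 1 := by
      rw [List.rotate_rotate]
    rw [this, cycCost_rotate_one, ih]

lemma cycCost_cons_ge (c : V → V → ℝ) (htri : ∀ x y z, c x z ≤ c x y + c y z)
    (b : V) (M : List V) (hM : M ≠ []) :
    cycCost c M ≤ cycCost c (b :: M) := by
  cases M with
  | nil => exact absurd rfl hM
  | cons y m =>
    rw [cycCost_cons, cycCost_cons]
    show pathCost c y (m ++ [y]) ≤ c b y + pathCost c y (m ++ [b])
    rw [pathCost_append c m y [y], pathCost_append c m y [b]]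
    simp only [pathCost, add_zero]
    have := htri (m.getLastD y) b y
    linarith [htri (m.getLastD y) b y]


variable [DecidableEq V]

lemma cycCost_delete (c : V → V → ℝ) (htri : ∀ x y z, c x z ≤ c x y + c y z)
    (A B : List V) (b : V) (hA : A ≠ []) :
    cycCost c (A ++ B) ≤ cycCost c (A ++ b :: B) := by
  have h1 : cycCost c (A ++ B) = cycCost c (B ++ A) := by
    rw [← List.rotate_append_length_eq A B, cycCost_rotate]
  have h2 : cycCost c (A ++ b :: B) = cycCost c ((b :: B) ++ A) := by
    rw [← List.rotate_append_length_eq A (b :: B), cycCost_rotate]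
  rw [h1, h2, List.cons_append]
  exact cycCost_cons_ge c htri b (B ++ A) (by simp [hA])

lemma exists_dup_split (l : List V) (h : ¬ l.Nodup) :
    ∃ (A : List V) (a : V) (B : List V), l = A ++ a :: B ∧ a ∈ A := by
  induction l with
  | nil => simp at h
  | cons x xs ih =>
    by_cases hx : x ∈ xs
    · obtain ⟨s, t, rfl⟩ := List.append_of_mem hx
      exact ⟨x :: s, x, t, rfl, by simp⟩
    · have : ¬ xs.Nodup := fun hn => h (List.nodup_cons.mpr ⟨hx, hn⟩)
      obtain ⟨A, a, B, rfl, haA⟩ := ih this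
      exact ⟨x :: A, a, B, rfl, by simp [haA]⟩

lemma exists_nodup_shortcut (c : V → V → ℝ) (htri : ∀ x y z, c x z ≤ c x y + c y z) :
    ∀ (n : ℕ) (L : List V), L.length ≤ n → L ≠ [] →
      ∃ l : List V, l.Nodup ∧ l.toFinset = L.toFinset ∧ cycCost c l ≤ cycCost c L := by
  intro n
  induction n with
  | zero => intro L hL hne; cases L with
    | nil => exact absurd rfl hne
    | cons x xs => simp at hL
  | succ n ih =>
    intro L hL hne
    by_cases hnd : L.Nodup
    · exact ⟨L, hnd, rfl, le_refl _⟩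
    · obtain ⟨A, a, B, rfl, haA⟩ := exists_dup_split L hnd
      have hA : A ≠ [] := by rintro rfl; simp at haA
      have hlen : (A ++ B).length ≤ n := by
        have := hL; simp at this ⊢; omega
      have hne' : A ++ B ≠ [] := by simp [hA]
      obtain ⟨l, hl1, hl2, hl3⟩ := ih (A ++ B) hlen hne'
      refine ⟨l, hl1, ?_, le_trans hl3 (cycCost_delete c htri A B a hA)⟩
      rw [hl2]
      ext v
      simp only [List.toFinset_append, Finset.mem_union, List.mem_toFinset, List.toFinset_cons,
        Finset.mem_insert]
      constructor
      · rintro (h | h) <;> tauto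
      · rintro (h | rfl | h)
        · tauto
        · exact Or.inl haA
        · tauto

/-- tours exist -/
lemma tour_exists (A : Finset V) : IsTour A A.toList :=
  ⟨A.nodup_toList, A.toList_toFinset⟩

lemma TSP_set_finite (c : V → V → ℝ) (A : Finset V) :
    {x : ℝ | ∃ l : List V, IsTour A l ∧ x = cycCost c l}.Finite := by
  have hsub : {x : ℝ | ∃ l : List V, IsTour A l ∧ x = cycCost c l} ⊆
      (cycCost c) '' {l | l ∈ A.toList.permutations} := by
    rintro x ⟨l, ⟨hnd, hfs⟩, rfl⟩
    refine ⟨l, ?_, rfl⟩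
    simp only [Set.mem_setOf_eq, List.mem_permutations]
    rw [List.perm_ext_iff_of_nodup hnd A.nodup_toList]
    intro a
    rw [← List.mem_toFinset, hfs, Finset.mem_toList]
  exact Set.Finite.subset ((A.toList.permutations.finite_toSet).image _) hsub

lemma TSP_nonempty (c : V → V → ℝ) (A : Finset V) :
    {x : ℝ | ∃ l : List V, IsTour A l ∧ x = cycCost c l}.Nonempty :=
  ⟨cycCost c A.toList, A.toList, tour_exists A, rfl⟩

lemma TSP_mem (c : V → V → ℝ) (A : Finset V) :
    ∃ l : List V, IsTour A l ∧ TSP c A = cycCost c l :=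
  Set.Nonempty.csInf_mem (TSP_nonempty c A) (TSP_set_finite c A)

lemma TSP_le (c : V → V → ℝ) (A : Finset V) (l : List V) (hl : IsTour A l) :
    TSP c A ≤ cycCost c l :=
  csInf_le (Set.Finite.bddBelow (TSP_set_finite c A)) ⟨l, hl, rfl⟩

lemma TSP_nonneg (c : V → V → ℝ) (hc0 : ∀ x y, 0 ≤ c x y) (A : Finset V) :
    0 ≤ TSP c A := by
  obtain ⟨l, _, hEq⟩ := TSP_mem c A
  rw [hEq]; exact cycCost_nonneg c hc0 l


lemma cycCost_glue (c : V → V → ℝ) (d : V) (xs ys : List V) :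
    cycCost c ((d :: xs) ++ (d :: ys)) = cycCost c (d :: xs) + cycCost c (d :: ys) := by
  rw [List.cons_append, cycCost_cons, cycCost_cons, cycCost_cons,
    List.append_assoc xs (d :: ys) [d], pathCost_append c xs d ((d :: ys) ++ [d]),
    pathCost_append c xs d [d]]
  show _ + (c (xs.getLastD d) d + pathCost c d (ys ++ [d])) = _
  simp [pathCost]
  ring

lemma toFinset_rotate_split (s t : List V) (d : V) :
    ((d :: t) ++ s).toFinset = (s ++ d :: t).toFinset := by
  ext v; simp; tauto

lemma TSP_union (c : V → V → ℝ) (htri : ∀ x y z, c x z ≤ c x y + c y z)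
    (d : V) (X Y : Finset V) (hdX : d ∈ X) (hdY : d ∈ Y) :
    TSP c (X ∪ Y) ≤ TSP c X + TSP c Y := by
  obtain ⟨lX, ⟨hndX, hfsX⟩, hcX⟩ := TSP_mem c X
  obtain ⟨lY, ⟨hndY, hfsY⟩, hcY⟩ := TSP_mem c Y
  have hdlX : d ∈ lX := by rw [← List.mem_toFinset, hfsX]; exact hdX
  have hdlY : d ∈ lY := by rw [← List.mem_toFinset, hfsY]; exact hdY
  obtain ⟨s, t, rfl⟩ := List.append_of_mem hdlX
  obtain ⟨s', t', rfl⟩ := List.append_of_mem hdlY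
  have hrotX : cycCost c ((d :: t) ++ s) = cycCost c (s ++ d :: t) := by
    rw [← List.rotate_append_length_eq s (d :: t), cycCost_rotate]
  have hrotY : cycCost c ((d :: t') ++ s') = cycCost c (s' ++ d :: t') := by
    rw [← List.rotate_append_length_eq s' (d :: t'), cycCost_rotate]
  set L := (d :: (t ++ s)) ++ (d :: (t' ++ s')) with hL
  have hcostL : cycCost c L = TSP c X + TSP c Y := by
    rw [hL, cycCost_glue, hcX, hcY, ← hrotX, ← hrotY]; rfl
  obtain ⟨l, hnd, hfs, hle⟩ := exists_nodup_shortcut c htri L.length L (le_refl _) (by simp [hL])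
  have hfs' : l.toFinset = X ∪ Y := by
    rw [hfs, hL]
    rw [List.toFinset_append]
    rw [show d :: (t ++ s) = (d :: t) ++ s from rfl, show d :: (t' ++ s') = (d :: t') ++ s' from rfl,
      toFinset_rotate_split s t d, toFinset_rotate_split s' t' d, hfsX, hfsY]
  calc TSP c (X ∪ Y) ≤ cycCost c l := TSP_le c (X ∪ Y) l ⟨hnd, hfs'⟩
    _ ≤ cycCost c L := hle
    _ = TSP c X + TSP c Y := hcostL

lemma TSP_sup (c : V → V → ℝ) (hc0 : ∀ x y, 0 ≤ c x y)
    (htri : ∀ x y z, c x z ≤ c x y + c y z) (d : V)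
    {ι : Type*} [DecidableEq ι] (s : Finset ι) (hs : s.Nonempty) (B : ι → Finset V)
    (hdB : ∀ j ∈ s, d ∈ B j) :
    TSP c (s.sup B) ≤ ∑ j ∈ s, TSP c (B j) := by
  induction hs using Finset.Nonempty.cons_induction with
  | singleton j => simp
  | cons j s hj hs ih =>
    rw [Finset.sup_cons, Finset.sum_cons]
    have h1 : TSP c (B j ⊔ s.sup B) ≤ TSP c (B j) + TSP c (s.sup B) := by
      have hd1 : d ∈ B j := hdB j (Finset.mem_cons_self j s)
      have hd2 : d ∈ s.sup B := by
        obtain ⟨j', hj'⟩ := hs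
        exact Finset.mem_of_subset (Finset.le_sup hj') (hdB j' (Finset.mem_cons_of_mem hj'))
      exact TSP_union c htri d (B j) (s.sup B) hd1 hd2
    have h2 := ih (fun j' hj' => hdB j' (Finset.mem_cons_of_mem hj'))
    linarith


/-- per-vertex distribution over index sets -/
noncomputable def mu (k : ℕ) (q : ℝ) (S : Finset (Fin k)) : ℝ :=
  (if S = Finset.univ then ((k : ℝ) * q - 1) / ((k : ℝ) - 1) else 0) +
  ∑ j : Fin k, if S = {j} then (1 - ((k : ℝ) * q - 1) / ((k : ℝ) - 1)) / (k : ℝ) else 0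

section mu
variable {k : ℕ} {q : ℝ}

lemma t_nonneg (hk : 1 ≤ k) (hq1 : 1 ≤ (k : ℝ) * q) :
    0 ≤ ((k : ℝ) * q - 1) / ((k : ℝ) - 1) := by
  rcases eq_or_lt_of_le hk with h | h
  · rw [← h]; norm_num
  · have : (1:ℝ) < (k:ℝ) := by exact_mod_cast h
    apply div_nonneg <;> linarith

lemma t_le_one (hk : 1 ≤ k) (hq2 : q ≤ 1) :
    ((k : ℝ) * q - 1) / ((k : ℝ) - 1) ≤ 1 := by
  rcases eq_or_lt_of_le hk with h | h
  · rw [← h]; norm_num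
  · have hk' : (1:ℝ) < (k:ℝ) := by exact_mod_cast h
    rw [div_le_one (by linarith)]
    nlinarith [hk', hq2]

lemma mu_nonneg (hk : 1 ≤ k) (hq1 : 1 ≤ (k : ℝ) * q) (hq2 : q ≤ 1) (S : Finset (Fin k)) :
    0 ≤ mu k q S := by
  have hkpos : (0:ℝ) < (k:ℝ) := by exact_mod_cast lt_of_lt_of_le Nat.zero_lt_one hk
  have h1 := t_nonneg hk hq1
  have h2 := t_le_one hk hq2
  apply add_nonneg
  · split
    · exact h1
    · exact le_refl 0
  · apply Finset.sum_nonneg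
    intro j _
    split
    · apply div_nonneg (by linarith) (le_of_lt hkpos)
    · exact le_refl 0

lemma mu_total (hk : 1 ≤ k) : ∑ S : Finset (Fin k), mu k q S = 1 := by
  have hkpos : (0:ℝ) < (k:ℝ) := by exact_mod_cast lt_of_lt_of_le Nat.zero_lt_one hk
  unfold mu
  rw [Finset.sum_add_distrib, Finset.sum_ite_eq' Finset.univ Finset.univ
    (fun _ => ((k : ℝ) * q - 1) / ((k : ℝ) - 1))]
  rw [Finset.sum_comm]
  simp only [Finset.sum_ite_eq' Finset.univ, Finset.mem_univ, if_true]
  rw [Finset.sum_const, Finset.card_univ, Fintype.card_fin, nsmul_eq_mul]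
  field_simp
  ring

lemma mu_marginal (hk : 1 ≤ k) (hq1 : 1 ≤ (k : ℝ) * q) (hq2 : q ≤ 1) (j₀ : Fin k) :
    ∑ S ∈ Finset.univ.filter (fun S : Finset (Fin k) => j₀ ∈ S), mu k q S = q := by
  have hkpos : (0:ℝ) < (k:ℝ) := by exact_mod_cast lt_of_lt_of_le Nat.zero_lt_one hk
  unfold mu
  rw [Finset.sum_add_distrib]
  have e1 : ∑ S ∈ Finset.univ.filter (fun S : Finset (Fin k) => j₀ ∈ S),
      (if S = Finset.univ then ((k : ℝ) * q - 1) / ((k : ℝ) - 1) else 0)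
      = ((k : ℝ) * q - 1) / ((k : ℝ) - 1) := by
    rw [Finset.sum_ite_eq' _ Finset.univ (fun _ => ((k : ℝ) * q - 1) / ((k : ℝ) - 1))]
    simp
  have e2 : ∑ S ∈ Finset.univ.filter (fun S : Finset (Fin k) => j₀ ∈ S),
      ∑ j : Fin k, (if S = {j} then (1 - ((k : ℝ) * q - 1) / ((k : ℝ) - 1)) / (k : ℝ) else 0)
      = (1 - ((k : ℝ) * q - 1) / ((k : ℝ) - 1)) / (k : ℝ) := by
    rw [Finset.sum_comm]
    have : ∀ j : Fin k, ∑ S ∈ Finset.univ.filter (fun S : Finset (Fin k) => j₀ ∈ S),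
        (if S = {j} then (1 - ((k : ℝ) * q - 1) / ((k : ℝ) - 1)) / (k : ℝ) else 0)
        = if j = j₀ then (1 - ((k : ℝ) * q - 1) / ((k : ℝ) - 1)) / (k : ℝ) else 0 := by
      intro j
      rw [Finset.sum_ite_eq' _ ({j} : Finset (Fin k))
        (fun _ => (1 - ((k : ℝ) * q - 1) / ((k : ℝ) - 1)) / (k : ℝ))]
      simp only [Finset.mem_filter, Finset.mem_univ, true_and, Finset.mem_singleton]
      by_cases hj : j = j₀
      · simp [hj]
      · rw [if_neg (fun h => hj h.symm), if_neg hj]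
    rw [Finset.sum_congr rfl (fun j _ => this j), Finset.sum_ite_eq' Finset.univ j₀
      (fun _ => (1 - ((k : ℝ) * q - 1) / ((k : ℝ) - 1)) / (k : ℝ))]
    simp
  rw [e1, e2]
  rcases eq_or_lt_of_le hk with h | h
  · have hq : q = 1 := le_antisymm hq2 (by rw [← h] at hq1; simpa using hq1)
    rw [← h, hq]; norm_num
  · have hk' : (1:ℝ) < (k:ℝ) := by exact_mod_cast h
    have hne1 : (k:ℝ) - 1 ≠ 0 := by linarith
    have hne2 : (k:ℝ) ≠ 0 := by linarith
    field_simp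
    ring

lemma mu_compl (hk : 1 ≤ k) (hq1 : 1 ≤ (k : ℝ) * q) (hq2 : q ≤ 1) (j₀ : Fin k) :
    ∑ S ∈ Finset.univ.filter (fun S : Finset (Fin k) => j₀ ∉ S), mu k q S = 1 - q := by
  have := Finset.sum_filter_add_sum_filter_not Finset.univ
    (fun S : Finset (Fin k) => j₀ ∈ S) (mu k q)
  rw [mu_marginal hk hq1 hq2 j₀] at this
  rw [mu_total hk] at this
  linarith

lemma mu_empty (hk : 1 ≤ k) : mu k q ∅ = 0 := by
  have : Nonempty (Fin k) := ⟨⟨0, hk⟩⟩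
  unfold mu
  rw [if_neg (Ne.symm (Finset.univ_nonempty.ne_empty)),
    Finset.sum_eq_zero (fun j _ => if_neg (Ne.symm (Finset.singleton_ne_empty j)))]
  simp

lemma mu_depot (hk : 1 ≤ k) {S : Finset (Fin k)} (h : mu k 1 S ≠ 0) : S = Finset.univ := by
  by_contra hS
  apply h
  unfold mu
  rw [if_neg hS]
  rcases eq_or_lt_of_le hk with hk1 | hk2
  · -- k = 1 : any singleton is univ
    subst hk1
    have : ∀ j : Fin 1, S ≠ {j} := by
      intro j hj
      exact hS (hj.trans (Finset.eq_univ_of_card _ (by simp)))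
    rw [Finset.sum_eq_zero (fun j _ => if_neg (this j))]
    simp
  · have hk' : (1:ℝ) < (k:ℝ) := by exact_mod_cast hk2
    have ht : (1 - ((k : ℝ) * 1 - 1) / ((k : ℝ) - 1)) / (k : ℝ) = 0 := by
      rw [mul_one, div_self (by linarith)]
      simp
    rw [Finset.sum_eq_zero (fun j _ => by rw [ht]; simp)]
    simp

end mu

section expectation

variable {V : Type*} [Fintype V] [DecidableEq V]

/-- joint weight of an outcome assigning an index set to each vertex -/
noncomputable def W (k : ℕ) (p : V → ℝ) (ω : V → Finset (Fin k)) : ℝ :=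
  ∏ v, mu k (p v) (ω v)

variable {k : ℕ} {p : V → ℝ}

lemma W_nonneg (hk : 1 ≤ k) (hkp : ∀ v, 1 ≤ (k : ℝ) * p v) (hp1 : ∀ v, p v ≤ 1)
    (ω : V → Finset (Fin k)) : 0 ≤ W k p ω :=
  Finset.prod_nonneg fun v _ => mu_nonneg hk (hkp v) (hp1 v) (ω v)

lemma W_total (hk : 1 ≤ k) : ∑ ω : V → Finset (Fin k), W k p ω = 1 := by
  unfold W
  rw [← Fintype.piFinset_univ,
    ← Finset.prod_univ_sum (fun _ => Finset.univ) (fun v S => mu k (p v) S)]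
  exact Finset.prod_eq_one fun v _ => mu_total hk

lemma W_fiber (hk : 1 ≤ k) (hkp : ∀ v, 1 ≤ (k : ℝ) * p v) (hp1 : ∀ v, p v ≤ 1)
    (j : Fin k) (A : Finset V) :
    ∑ ω ∈ Finset.univ.filter
        (fun ω : V → Finset (Fin k) => Finset.univ.filter (fun v => j ∈ ω v) = A),
      W k p ω = (∏ v ∈ A, p v) * (∏ v ∈ Aᶜ, (1 - p v)) := by
  have hset : Finset.univ.filter
        (fun ω : V → Finset (Fin k) => Finset.univ.filter (fun v => j ∈ ω v) = A)
      = Fintype.piFinset (fun v => if v ∈ A then Finset.univ.filter (fun S => j ∈ S)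
          else Finset.univ.filter (fun S => j ∉ S)) := by
    ext ω
    simp only [Finset.mem_filter, Finset.mem_univ, true_and, Fintype.mem_piFinset,
      Finset.ext_iff]
    constructor
    · intro h v
      have hv := h v
      by_cases hvA : v ∈ A
      · simp only [hvA, if_true, Finset.mem_filter, Finset.mem_univ, true_and]
        exact hv.mpr hvA
      · simp only [hvA, if_false, Finset.mem_filter, Finset.mem_univ, true_and]
        exact fun hj => hvA (hv.mp hj)
    · intro h v
      have hv := h v
      by_cases hvA : v ∈ A
      · simp only [hvA, if_true, Finset.mem_filter, Finset.mem_univ, true_and] at hv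
        exact ⟨fun _ => hvA, fun _ => hv⟩
      · simp only [hvA, if_false, Finset.mem_filter, Finset.mem_univ, true_and] at hv
        exact ⟨fun hj => absurd hj hv, fun hvA' => absurd hvA' hvA⟩
  unfold W
  rw [hset, ← Finset.prod_univ_sum]
  have hfac : ∀ v : V, (∑ S ∈ (if v ∈ A then Finset.univ.filter (fun S : Finset (Fin k) => j ∈ S)
        else Finset.univ.filter (fun S => j ∉ S)), mu k (p v) S)
      = if v ∈ A then p v else 1 - p v := by
    intro v
    by_cases hvA : v ∈ A
    · simp only [hvA, if_true]
      exact mu_marginal hk (hkp v) (hp1 v) j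
    · simp only [hvA, if_false]
      exact mu_compl hk (hkp v) (hp1 v) j
  rw [Finset.prod_congr rfl (fun v _ => hfac v), Finset.prod_ite (fun v => p v) (fun v => 1 - p v)]
  congr 1
  · apply Finset.prod_congr _ (fun _ _ => rfl)
    ext v; simp
  · apply Finset.prod_congr _ (fun _ _ => rfl)
    ext v; simp

lemma W_expect (c : V → V → ℝ) (hk : 1 ≤ k) (hkp : ∀ v, 1 ≤ (k : ℝ) * p v)
    (hp1 : ∀ v, p v ≤ 1) (j : Fin k) :
    ∑ ω : V → Finset (Fin k), W k p ω * TSP c (Finset.univ.filter (fun v => j ∈ ω v))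
      = apExpect p (fun A => TSP c A) := by
  rw [apExpect, ← Finset.sum_fiberwise Finset.univ
    (fun ω : V → Finset (Fin k) => Finset.univ.filter (fun v => j ∈ ω v))
    (fun ω => W k p ω * TSP c (Finset.univ.filter (fun v => j ∈ ω v)))]
  apply Finset.sum_congr rfl
  intro A _
  have : ∀ ω ∈ Finset.univ.filter
      (fun ω : V → Finset (Fin k) => Finset.univ.filter (fun v => j ∈ ω v) = A),
      W k p ω * TSP c (Finset.univ.filter (fun v => j ∈ ω v)) = W k p ω * TSP c A := by
    intro ω hω
    rw [(Finset.mem_filter.mp hω).2]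
  rw [Finset.sum_congr rfl this, ← Finset.sum_mul, W_fiber hk hkp hp1 j A]

/-- The key inequality: `TSP(V) ≤ k · E[TSP(A)]`. -/
lemma TSP_le_k_apExpect (c : V → V → ℝ) (hc0 : ∀ x y, 0 ≤ c x y)
    (htri : ∀ x y z, c x z ≤ c x y + c y z)
    (hp1 : ∀ v, p v ≤ 1) (d : V) (hd : p d = 1)
    (hk : 1 ≤ k) (hkp : ∀ v, 1 ≤ (k : ℝ) * p v) :
    TSP c (Finset.univ : Finset V) ≤ (k : ℝ) * apExpect p (fun A => TSP c A) := by
  have hFin : Nonempty (Fin k) := ⟨⟨0, hk⟩⟩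
  have key : TSP c (Finset.univ : Finset V)
      = ∑ ω : V → Finset (Fin k), W k p ω * TSP c Finset.univ := by
    rw [← Finset.sum_mul, W_total hk, one_mul]
  rw [key]
  have step : ∀ ω : V → Finset (Fin k),
      W k p ω * TSP c Finset.univ
        ≤ W k p ω * ∑ j : Fin k, TSP c (Finset.univ.filter (fun v => j ∈ ω v)) := by
    intro ω
    rcases eq_or_lt_of_le (W_nonneg hk hkp hp1 ω) with h0 | hpos
    · rw [← h0, zero_mul, zero_mul]
    · apply mul_le_mul_of_nonneg_left _ (le_of_lt hpos)
      have hne : ∀ v, mu k (p v) (ω v) ≠ 0 := by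
        intro v hv
        exact absurd (Finset.prod_eq_zero (Finset.mem_univ v) hv) (ne_of_gt hpos)
      have hnonempty : ∀ v, (ω v).Nonempty := by
        intro v
        rw [Finset.nonempty_iff_ne_empty]
        intro he
        exact hne v (by rw [he]; exact mu_empty hk)
      have hωd : ω d = Finset.univ := by
        apply mu_depot hk
        rw [← hd]
        exact hne d
      have hsup : (Finset.univ : Finset (Fin k)).sup
          (fun j => Finset.univ.filter (fun v => j ∈ ω v)) = Finset.univ := by
        apply Finset.eq_univ_of_forall
        intro v
        obtain ⟨j, hj⟩ := hnonempty v
        apply Finset.mem_of_subset (Finset.le_sup (Finset.mem_univ j))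
        simp only [Finset.mem_filter, Finset.mem_univ, true_and]
        exact hj
      have := TSP_sup c hc0 htri d (Finset.univ : Finset (Fin k)) Finset.univ_nonempty
        (fun j => Finset.univ.filter (fun v => j ∈ ω v))
        (fun j _ => by
          simp only [Finset.mem_filter, Finset.mem_univ, true_and]
          rw [hωd]; exact Finset.mem_univ j)
      rw [hsup] at this
      exact this
  calc ∑ ω : V → Finset (Fin k), W k p ω * TSP c Finset.univ
      ≤ ∑ ω : V → Finset (Fin k), W k p ω
          * ∑ j : Fin k, TSP c (Finset.univ.filter (fun v => j ∈ ω v)) :=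
        Finset.sum_le_sum fun ω _ => step ω
    _ = ∑ ω : V → Finset (Fin k), ∑ j : Fin k,
          W k p ω * TSP c (Finset.univ.filter (fun v => j ∈ ω v)) := by
        apply Finset.sum_congr rfl
        intro ω _
        rw [Finset.mul_sum]
    _ = ∑ j : Fin k, ∑ ω : V → Finset (Fin k),
          W k p ω * TSP c (Finset.univ.filter (fun v => j ∈ ω v)) := Finset.sum_comm
    _ = ∑ _j : Fin k, apExpect p (fun A => TSP c A) := by
        apply Finset.sum_congr rfl
        intro j _
        exact W_expect c hk hkp hp1 j
    _ = (k : ℝ) * apExpect p (fun A => TSP c A) := by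
        rw [Finset.sum_const, Finset.card_univ, Fintype.card_fin, nsmul_eq_mul]

end expectation

end Stmt10

/-- for an instance with a depot and minimum activation probability
`p_min > 0`, any `α`-approximate ATSP tour `T` on `V` satisfies
`c(T) ≤ α·⌈1/p_min⌉·E[TSP(A,c)]`. -/
theorem statement10 {V : Type*} [Fintype V] [DecidableEq V]
    (c : V → V → ℝ) (p : V → ℝ)
    (hc0 : ∀ x y, 0 ≤ c x y)
    (hcrefl : ∀ v, c v v = 0)
    (htri : ∀ x y z, c x z ≤ c x y + c y z)
    (hp0 : ∀ v, 0 ≤ p v) (hp1 : ∀ v, p v ≤ 1)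
    (d : V) (hd : p d = 1)
    (hpmin : 0 < Finset.univ.inf' ⟨d, Finset.mem_univ d⟩ p)
    (α : ℝ) (hα : 1 ≤ α)
    (T : List V) (hT : IsTour Finset.univ T)
    (hTapx : cycCost c T ≤ α * TSP c Finset.univ) :
    cycCost c T ≤
      α * (⌈1 / Finset.univ.inf' ⟨d, Finset.mem_univ d⟩ p⌉ : ℝ) *
        apExpect p (fun A => TSP c A) := by
  set pmin := Finset.univ.inf' ⟨d, Finset.mem_univ d⟩ p with hpmin_def
  have hpv : ∀ v, pmin ≤ p v := fun v => Finset.inf'_le p (Finset.mem_univ v)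
  set k : ℕ := (⌈1 / pmin⌉).toNat with hk_def
  have hceil_pos : (0 : ℤ) < ⌈1 / pmin⌉ := Int.ceil_pos.mpr (by positivity)
  have hkcast : ((k : ℕ) : ℝ) = ((⌈1 / pmin⌉ : ℤ) : ℝ) := by
    rw [hk_def]
    exact_mod_cast congrArg Int.cast (Int.toNat_of_nonneg (le_of_lt hceil_pos))
  have hk1 : 1 ≤ k := by
    rw [hk_def]
    omega
  have hkp : ∀ v, 1 ≤ (k : ℝ) * p v := by
    intro v
    have hpvpos : 0 < p v := lt_of_lt_of_le hpmin (hpv v)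
    have h1 : 1 / p v ≤ 1 / pmin := one_div_le_one_div_of_le hpmin (hpv v)
    have h2 : (1 / pmin : ℝ) ≤ (k : ℝ) := by
      rw [hkcast]
      exact Int.le_ceil _
    have : 1 / p v ≤ (k : ℝ) := le_trans h1 h2
    rw [div_le_iff₀ hpvpos] at this
    linarith
  have hmain := Stmt10.TSP_le_k_apExpect (p := p) c hc0 htri hp1 d hd hk1 hkp
  have hα0 : (0:ℝ) ≤ α := le_trans zero_le_one hα
  calc cycCost c T ≤ α * TSP c Finset.univ := hTapx
    _ ≤ α * ((k : ℝ) * apExpect p (fun A => TSP c A)) :=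
        mul_le_mul_of_nonneg_left hmain hα0
    _ = α * (⌈1 / pmin⌉ : ℝ) * apExpect p (fun A => TSP c A) := by
        rw [← hkcast]; ring

end
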